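/- Let p > 2, d ≥ 2, and suppose φ : (0,∞) → (0,∞) is C¹ with φ(r) ≍ r^β for some β > (p-d)/p, β ≠ 0, and |φ'(r)| = e^{-r} on each interval [2n+1/4, 2n+3/4] (n = 1, 2, …). Then M₁^φ := ∫₁^∞ (φ^p r^{d-1})^{-1/(p-1)} dr < ∞ while M₂^φ := ∫₁^∞ φ^{-2} |φ'|^{2-p} r^{1-d} dr = ∞, provided p ≤ d. -/

import Mathlib

open Real MeasureTheory

set_option maxHeartbeats 1000000 in
theorem stmt_19 (p : ℝ) (hp : 2 < p) (d : ℕ) (hd : 2 ≤ d) (hpd : p ≤ d)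
    (β : ℝ) (hβ₁ : (p - d) / p < β) (hβ₂ : β ≠ 0)
    (φ : ℝ → ℝ) (hφpos : ∀ r : ℝ, 0 < r → 0 < φ r)
    (hφC1 : ContDiffOn ℝ 1 φ (Set.Ioi 0))
    (hasymp : ∃ C : ℝ, 1 ≤ C ∧ ∀ r : ℝ, 1 ≤ r → C⁻¹ * r ^ β ≤ φ r ∧ φ r ≤ C * r ^ β)
    (hderiv : ∀ n : ℕ, 1 ≤ n → ∀ r : ℝ,
        2 * n + 1 / 4 ≤ r → r ≤ 2 * n + 3 / 4 → |deriv φ r| = Real.exp (-r)) :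
    IntegrableOn (fun r : ℝ => (φ r ^ p * r ^ ((d : ℝ) - 1)) ^ (-1 / (p - 1))) (Set.Ioi 1) ∧
    (∫⁻ r in Set.Ioi (1 : ℝ),
        ENNReal.ofReal (φ r ^ (-2 : ℝ) * |deriv φ r| ^ (2 - p) * r ^ (1 - (d : ℝ)))) = ⊤ := by
  obtain ⟨C, hC, hbound⟩ := hasymp
  have hC0 : 0 < C := lt_of_lt_of_le one_pos hC
  have hp0 : (0 : ℝ) < p := by linarith
  have hp1 : (0 : ℝ) < p - 1 := by linarith
  have hd2 : (2 : ℝ) ≤ (d : ℝ) := by exact_mod_cast hd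
  have hβp : p - d < β * p := by
    have := (div_lt_iff₀ hp0).mp hβ₁
    linarith
  constructor
  · -- Part 1: integrability
    set e : ℝ := -1 / (p - 1) with he
    set A : ℝ := β * p + (d : ℝ) - 1 with hA
    have hApos : p - 1 < A := by simp only [hA]; linarith
    have hAe : A * e < -1 := by
      have h1 : 1 < A / (p - 1) := (one_lt_div hp1).2 hApos
      have h2 : A * e = -(A / (p - 1)) := by rw [he]; ring
      rw [h2]; linarith
    have hg : IntegrableOn (fun r : ℝ => (C ^ (-p)) ^ e * r ^ (A * e)) (Set.Ioi 1) :=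
      (integrableOn_Ioi_rpow_of_lt hAe one_pos).const_mul _
    have hφcont : ContinuousOn φ (Set.Ioi 1) :=
      hφC1.continuousOn.mono (fun x hx => Set.mem_Ioi.2 (lt_trans one_pos (Set.mem_Ioi.1 hx)))
    have hfcont : ContinuousOn
        (fun r : ℝ => (φ r ^ p * r ^ ((d : ℝ) - 1)) ^ (-1 / (p - 1))) (Set.Ioi 1) := by
      apply ContinuousOn.rpow_const
      · apply ContinuousOn.mul
        · exact hφcont.rpow_const fun x hx =>
            Or.inl (ne_of_gt (hφpos x (lt_trans one_pos hx)))
        · exact continuousOn_id.rpow_const fun x hx =>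
            Or.inl (ne_of_gt (lt_trans one_pos hx))
      · intro x hx
        have hx0 : (0 : ℝ) < x := lt_trans one_pos hx
        have : 0 < φ x ^ p * x ^ ((d : ℝ) - 1) := by
          apply mul_pos (rpow_pos_of_pos (hφpos x hx0) p) (rpow_pos_of_pos hx0 _)
        exact Or.inl (ne_of_gt this)
    apply Integrable.mono' hg (hfcont.aestronglyMeasurable measurableSet_Ioi)
    rw [ae_restrict_iff' measurableSet_Ioi]
    refine Filter.Eventually.of_forall fun r hr => ?_
    have hr1 : (1 : ℝ) ≤ r := le_of_lt hr
    have hr0 : (0 : ℝ) < r := lt_of_lt_of_le one_pos hr1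
    have hφr : 0 < φ r := hφpos r hr0
    have hlow : C ^ (-p) * r ^ A ≤ φ r ^ p * r ^ ((d : ℝ) - 1) := by
      have h1 : C⁻¹ * r ^ β ≤ φ r := (hbound r hr1).1
      have h1' : 0 < C⁻¹ * r ^ β := mul_pos (inv_pos.2 hC0) (rpow_pos_of_pos hr0 β)
      have h2 : (C⁻¹ * r ^ β) ^ p ≤ φ r ^ p :=
        Real.rpow_le_rpow (le_of_lt h1') h1 (le_of_lt hp0)
      have h3 : (C⁻¹ * r ^ β) ^ p = C ^ (-p) * r ^ (β * p) := by
        rw [Real.mul_rpow (by positivity) (by positivity),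
          ← Real.rpow_mul (le_of_lt hr0),
          Real.inv_rpow (le_of_lt hC0), ← Real.rpow_neg (le_of_lt hC0)]
      have h4 : C ^ (-p) * r ^ A = (C ^ (-p) * r ^ (β * p)) * r ^ ((d : ℝ) - 1) := by
        rw [mul_assoc, ← Real.rpow_add hr0]
        rw [hA]; ring_nf
      rw [h4]
      apply mul_le_mul_of_nonneg_right _ (le_of_lt (rpow_pos_of_pos hr0 _))
      rw [← h3]; exact h2
    have hlow0 : 0 < C ^ (-p) * r ^ A :=
      mul_pos (rpow_pos_of_pos hC0 _) (rpow_pos_of_pos hr0 _)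
    have hbig : (φ r ^ p * r ^ ((d : ℝ) - 1)) ^ (-1 / (p - 1))
        ≤ (C ^ (-p) * r ^ A) ^ e := by
      rw [he]
      exact Real.rpow_le_rpow_of_nonpos hlow0 hlow
        (by rw [neg_div]; exact neg_nonpos.2 (le_of_lt (div_pos one_pos hp1)))
    have heq : (C ^ (-p) * r ^ A) ^ e = (C ^ (-p)) ^ e * r ^ (A * e) := by
      rw [Real.mul_rpow (le_of_lt (rpow_pos_of_pos hC0 _))
        (le_of_lt (rpow_pos_of_pos hr0 _)), ← Real.rpow_mul (le_of_lt hr0)]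
    rw [Real.norm_eq_abs, abs_of_nonneg (le_of_lt (rpow_pos_of_pos
      (mul_pos (rpow_pos_of_pos hφr p) (rpow_pos_of_pos hr0 _)) _))]
    calc (φ r ^ p * r ^ ((d : ℝ) - 1)) ^ (-1 / (p - 1)) ≤ (C ^ (-p) * r ^ A) ^ e := hbig
      _ = (C ^ (-p)) ^ e * r ^ (A * e) := heq
  · -- Part 2: divergence
    by_contra hfin
    have hlt : (∫⁻ r in Set.Ioi (1 : ℝ),
        ENNReal.ofReal (φ r ^ (-2 : ℝ) * |deriv φ r| ^ (2 - p) * r ^ (1 - (d : ℝ)))) < ⊤ :=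
      lt_top_iff_ne_top.2 hfin
    set M : ℝ := (∫⁻ r in Set.Ioi (1 : ℝ),
        ENNReal.ofReal (φ r ^ (-2 : ℝ) * |deriv φ r| ^ (2 - p) * r ^ (1 - (d : ℝ)))).toReal
      with hM
    have hM0 : 0 ≤ M := ENNReal.toReal_nonneg
    set b : ℝ := |β| with hb
    set s : ℝ := 2 * b + (d : ℝ) - 1 with hs
    set a : ℝ := 2 * (p - 2) / 3 with ha
    have ha0 : 0 < a := by rw [ha]; linarith
    have htend := tendsto_exp_mul_div_rpow_atTop s a ha0
    obtain ⟨X, hX⟩ := Filter.eventually_atTop.mp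
      (Filter.Tendsto.eventually_ge_atTop htend (2 * (M + 1) * C ^ (2 : ℝ)))
    obtain ⟨n, hn1, hnX⟩ : ∃ n : ℕ, 1 ≤ n ∧ X ≤ (n : ℝ) := by
      refine ⟨max 1 ⌈X⌉₊, le_max_left _ _, ?_⟩
      have h1 : X ≤ (⌈X⌉₊ : ℝ) := Nat.le_ceil X
      have h2 : (⌈X⌉₊ : ℝ) ≤ ((max 1 ⌈X⌉₊ : ℕ) : ℝ) := by exact_mod_cast le_max_right 1 ⌈X⌉₊
      linarith
    have hn1' : (1 : ℝ) ≤ (n : ℝ) := by exact_mod_cast hn1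
    set x : ℝ := 3 * (n : ℝ) with hx
    have hx0 : 0 < x := by rw [hx]; linarith
    have hxX : X ≤ x := by rw [hx]; linarith
    have hkey : 2 * (M + 1) * C ^ (2 : ℝ) ≤ Real.exp (a * x) / x ^ s := hX x hxX
    -- the constant lower bound on the interval
    set cn : ℝ := C ^ (-2 : ℝ) * x ^ (-(2 * b)) * Real.exp ((p - 2) * (2 * (n : ℝ)))
        * x ^ (1 - (d : ℝ)) with hcn
    have hcn_ge : 2 * (M + 1) ≤ cn := by
      have hxs : Real.exp (a * x) / x ^ s = Real.exp (a * x) * x ^ (-s) := by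
        rw [Real.rpow_neg (le_of_lt hx0), div_eq_mul_inv]
      have hexp_eq : Real.exp (a * x) = Real.exp ((p - 2) * (2 * (n : ℝ))) := by
        congr 1; rw [ha, hx]; ring
      have hxsplit : x ^ (-(2 * b)) * x ^ (1 - (d : ℝ)) = x ^ (-s) := by
        rw [← Real.rpow_add hx0]; congr 1; rw [hs]; ring
      have hcn_eq : cn = C ^ (-2 : ℝ) * (Real.exp (a * x) / x ^ s) := by
        rw [hxs, hcn, hexp_eq, ← hxsplit]; ring
      have hCC : C ^ (-2 : ℝ) * (2 * (M + 1) * C ^ (2 : ℝ)) = 2 * (M + 1) := by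
        rw [mul_comm (2 * (M + 1)) (C ^ (2 : ℝ)), ← mul_assoc,
          ← Real.rpow_add hC0]
        norm_num
      calc 2 * (M + 1) = C ^ (-2 : ℝ) * (2 * (M + 1) * C ^ (2 : ℝ)) := hCC.symm
        _ ≤ C ^ (-2 : ℝ) * (Real.exp (a * x) / x ^ s) :=
            mul_le_mul_of_nonneg_left hkey (le_of_lt (rpow_pos_of_pos hC0 _))
        _ = cn := hcn_eq.symm
    -- lower bound the integral over the interval
    set I : Set ℝ := Set.Icc (2 * (n : ℝ) + 1 / 4) (2 * (n : ℝ) + 3 / 4) with hI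
    have hsub : I ⊆ Set.Ioi 1 := by
      intro r hr
      have := hr.1
      simp only [Set.mem_Ioi]
      linarith
    have hptwise : ∀ r ∈ I, cn ≤ φ r ^ (-2 : ℝ) * |deriv φ r| ^ (2 - p) * r ^ (1 - (d : ℝ)) := by
      intro r hr
      have hr1 : (1 : ℝ) ≤ r := by have := hr.1; linarith
      have hr0 : (0 : ℝ) < r := lt_of_lt_of_le one_pos hr1
      have hrx : r ≤ x := by have := hr.2; rw [hx]; linarith
      have hr2n : 2 * (n : ℝ) ≤ r := by have := hr.1; linarith
      have hφr : 0 < φ r := hφpos r hr0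
      -- factor 1
      have hf1 : C ^ (-2 : ℝ) * x ^ (-(2 * b)) ≤ φ r ^ (-2 : ℝ) := by
        have h1 : φ r ≤ C * r ^ β := (hbound r hr1).2
        have h2 : (C * r ^ β) ^ (-2 : ℝ) ≤ φ r ^ (-2 : ℝ) :=
          Real.rpow_le_rpow_of_nonpos hφr h1 (by norm_num)
        have h3 : (C * r ^ β) ^ (-2 : ℝ) = C ^ (-2 : ℝ) * r ^ (β * (-2)) := by
          rw [Real.mul_rpow (le_of_lt hC0) (le_of_lt (rpow_pos_of_pos hr0 β)),
            ← Real.rpow_mul (le_of_lt hr0)]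
        have h4 : x ^ (-(2 * b)) ≤ r ^ (β * (-2)) := by
          rcases le_or_gt 0 β with hβ | hβ
          · have hbeq : b = β := abs_of_nonneg hβ
            have : x ^ (β * (-2)) ≤ r ^ (β * (-2)) :=
              Real.rpow_le_rpow_of_nonpos hr0 hrx (by nlinarith)
            calc x ^ (-(2 * b)) = x ^ (β * (-2)) := by rw [hbeq]; ring_nf
              _ ≤ r ^ (β * (-2)) := this
          · have hbeq : b = -β := abs_of_neg hβ
            have hx1 : (1 : ℝ) ≤ x := by rw [hx]; linarith
            have h5 : x ^ (-(2 * b)) ≤ 1 :=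
              Real.rpow_le_one_of_one_le_of_nonpos hx1 (by rw [hbeq]; nlinarith [abs_pos.2 hβ₂]; )
            have h6 : (1 : ℝ) ≤ r ^ (β * (-2)) :=
              Real.one_le_rpow hr1 (by nlinarith)
            linarith
        calc C ^ (-2 : ℝ) * x ^ (-(2 * b)) ≤ C ^ (-2 : ℝ) * r ^ (β * (-2)) :=
              mul_le_mul_of_nonneg_left h4 (le_of_lt (rpow_pos_of_pos hC0 _))
          _ = (C * r ^ β) ^ (-2 : ℝ) := h3.symm
          _ ≤ φ r ^ (-2 : ℝ) := h2
      -- factor 2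
      have hf2 : Real.exp ((p - 2) * (2 * (n : ℝ))) ≤ |deriv φ r| ^ (2 - p) := by
        have hd' := hderiv n hn1 r hr.1 hr.2
        rw [hd', ← Real.exp_mul]
        apply Real.exp_le_exp.2
        nlinarith
      -- factor 3
      have hf3 : x ^ (1 - (d : ℝ)) ≤ r ^ (1 - (d : ℝ)) :=
        Real.rpow_le_rpow_of_nonpos hr0 hrx (by linarith)
      have hpos1 : (0:ℝ) ≤ C ^ (-2 : ℝ) * x ^ (-(2 * b)) :=
        le_of_lt (mul_pos (rpow_pos_of_pos hC0 _) (rpow_pos_of_pos hx0 _))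
      have hpos2 : (0:ℝ) ≤ Real.exp ((p - 2) * (2 * (n : ℝ))) := le_of_lt (Real.exp_pos _)
      have hpos3 : (0:ℝ) ≤ x ^ (1 - (d : ℝ)) := le_of_lt (rpow_pos_of_pos hx0 _)
      have hpos12 : (0:ℝ) ≤ φ r ^ (-2 : ℝ) * |deriv φ r| ^ (2 - p) := by
        apply mul_nonneg (le_of_lt (rpow_pos_of_pos hφr _))
        exact le_trans hpos2 hf2
      rw [hcn]
      apply mul_le_mul _ hf3 hpos3 hpos12
      exact mul_le_mul hf1 hf2 hpos2 (le_of_lt (rpow_pos_of_pos hφr _))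
    have hIvol : volume I = ENNReal.ofReal (1 / 2) := by
      rw [hI, Real.volume_Icc]; norm_num
    have hcn0 : 0 ≤ cn := by linarith
    have hstep : ENNReal.ofReal (cn * (1 / 2)) ≤ ∫⁻ r in Set.Ioi (1 : ℝ),
        ENNReal.ofReal (φ r ^ (-2 : ℝ) * |deriv φ r| ^ (2 - p) * r ^ (1 - (d : ℝ))) := by
      have h1 : ∫⁻ r in I, (ENNReal.ofReal cn) = ENNReal.ofReal (cn * (1 / 2)) := by
        rw [setLIntegral_const, hIvol, ← ENNReal.ofReal_mul hcn0]
      rw [← h1]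
      have h2 : (∫⁻ r in I, (ENNReal.ofReal cn)) ≤ ∫⁻ r in I,
          ENNReal.ofReal (φ r ^ (-2 : ℝ) * |deriv φ r| ^ (2 - p) * r ^ (1 - (d : ℝ))) := by
        apply lintegral_mono_ae
        rw [ae_restrict_iff' measurableSet_Icc]
        exact Filter.Eventually.of_forall fun r hr =>
          ENNReal.ofReal_le_ofReal (hptwise r hr)
      exact le_trans h2 (lintegral_mono' (Measure.restrict_mono hsub le_rfl) le_rfl)
    have hfinal : cn * (1 / 2) ≤ M := by
      have := le_trans hstep (le_of_eq (ENNReal.ofReal_toReal hfin).symm)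
      exact (ENNReal.ofReal_le_ofReal_iff hM0).mp this
    linarith
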